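/- For the pp-wave metric ds² = dx² + dy² + 2 du dv − 2 e^{2ρx} du² on ℝ⁴ (ρ a nonzero constant), the vector fields y∂_y, u∂_v, and u∂_y all satisfy the affine symmetry condition L_Y Γ^γ_{αβ} = 0. -/

import Mathlib

open scoped BigOperators

noncomputable section

variable {ι : Type*}

/-- Partial derivative of `f` in the `i`-th coordinate direction at `x`. -/
def pd [Fintype ι] [DecidableEq ι] (f : (ι → ℝ) → ℝ) (i : ι) (x : ι → ℝ) : ℝ :=
  fderiv ℝ f x (Pi.single i 1)

/-- Christoffel symbols `Γ^a_{bc}` of the metric `g` with inverse `ginv`. -/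
def Γ [Fintype ι] [DecidableEq ι] (ginv g : (ι → ℝ) → ι → ι → ℝ) (a b c : ι)
    (x : ι → ℝ) : ℝ :=
  (1/2) * ∑ d, ginv x a d *
    (pd (fun y => g y d c) b x + pd (fun y => g y d b) c x - pd (fun y => g y b c) d x)

/-- Velocity components of a curve. -/
def vel (u : ℝ → ι → ℝ) (a : ι) (s : ℝ) : ℝ := deriv (fun t => u t a) s

/-- The affinely parametrized geodesic equation `ü^a + Γ^a_{bc}(u) u̇^b u̇^c = 0`. -/
def IsGeodesic [Fintype ι] [DecidableEq ι] (ginv g : (ι → ℝ) → ι → ι → ℝ)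
    (u : ℝ → ι → ℝ) : Prop :=
  ∀ s a, deriv (vel u a) s + ∑ b, ∑ c, Γ ginv g a b c (u s) * vel u b s * vel u c s = 0

/-- Components of the Lie derivative of the metric,
`(L_Y g)_{ab} = Y^c ∂_c g_{ab} + g_{cb} ∂_a Y^c + g_{ac} ∂_b Y^c`. -/
def LieG [Fintype ι] [DecidableEq ι] (g : (ι → ℝ) → ι → ι → ℝ) (Y : (ι → ℝ) → ι → ℝ)
    (x : ι → ℝ) (a b : ι) : ℝ :=
  (∑ c, Y x c * pd (fun y => g y a b) c x) + (∑ c, g x c b * pd (fun y => Y y c) a x) +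
    (∑ c, g x a c * pd (fun y => Y y c) b x)

/-- Components of the Lie derivative of the Christoffel symbols along `Y`:
`(L_Y Γ)^c_{ab} = Y^d ∂_d Γ^c_{ab} − Γ^d_{ab} ∂_d Y^c + Γ^c_{db} ∂_a Y^d
  + Γ^c_{ad} ∂_b Y^d + ∂_a ∂_b Y^c`. -/
def LieΓ [Fintype ι] [DecidableEq ι] (ginv g : (ι → ℝ) → ι → ι → ℝ)
    (Y : (ι → ℝ) → ι → ℝ) (c a b : ι) (x : ι → ℝ) : ℝ :=
  (∑ d, Y x d * pd (Γ ginv g c a b) d x) - (∑ d, Γ ginv g d a b x * pd (fun y => Y y c) d x)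
    + (∑ d, Γ ginv g c d b x * pd (fun y => Y y d) a x)
    + (∑ d, Γ ginv g c a d x * pd (fun y => Y y d) b x)
    + pd (fun y => pd (fun z => Y z c) b y) a x

/-- Covariant derivative of a vector field, `∇_b Y^c`. -/
def covD [Fintype ι] [DecidableEq ι] (ginv g : (ι → ℝ) → ι → ι → ℝ)
    (Y : (ι → ℝ) → ι → ℝ) (b c : ι) (x : ι → ℝ) : ℝ :=
  pd (fun y => Y y c) b x + ∑ d, Γ ginv g c b d x * Y x d

/-- Second covariant derivative of a vector field, `∇_a ∇_b Y^c`. -/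
def covD2 [Fintype ι] [DecidableEq ι] (ginv g : (ι → ℝ) → ι → ι → ℝ)
    (Y : (ι → ℝ) → ι → ℝ) (a b c : ι) (x : ι → ℝ) : ℝ :=
  pd (covD ginv g Y b c) a x + (∑ d, Γ ginv g c a d x * covD ginv g Y b d x)
    - ∑ d, Γ ginv g d a b x * covD ginv g Y d c x

/-- Riemann curvature `R^c{}_{bad}` defined from the Christoffel symbols in the usual way,
so that `∇_a ∇_b Y^c = R^c{}_{bad} Y^d` is the affine-vector-field equation. -/
def Riem [Fintype ι] [DecidableEq ι] (ginv g : (ι → ℝ) → ι → ι → ℝ) (c b a d : ι)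
    (x : ι → ℝ) : ℝ :=
  pd (Γ ginv g c d b) a x - pd (Γ ginv g c a b) d x
    + ∑ e, (Γ ginv g c a e x * Γ ginv g e d b x - Γ ginv g c d e x * Γ ginv g e a b x)

/-- The pp-wave metric `ds² = dx² + dy² + 2 du dv − 2 e^{2ρx} du²` on `ℝ⁴`, with
coordinates `(u,v,x,y) = (0,1,2,3)`. -/
def ppg (ρ : ℝ) (x : Fin 4 → ℝ) (a b : Fin 4) : ℝ :=
  if a = 0 ∧ b = 0 then -2 * Real.exp (2 * ρ * x 2)
  else if (a = 0 ∧ b = 1) ∨ (a = 1 ∧ b = 0) then 1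
  else if (a = 2 ∧ b = 2) ∨ (a = 3 ∧ b = 3) then 1
  else 0


/-- Explicit inverse of the pp-wave metric. -/
def gex (ρ : ℝ) (x : Fin 4 → ℝ) (a b : Fin 4) : ℝ :=
  if (a = 0 ∧ b = 1) ∨ (a = 1 ∧ b = 0) then 1
  else if a = 1 ∧ b = 1 then 2 * Real.exp (2 * ρ * x 2)
  else if (a = 2 ∧ b = 2) ∨ (a = 3 ∧ b = 3) then 1
  else 0

lemma my_pd_const (k : ℝ) (i : Fin 4) (x : Fin 4 → ℝ) : pd (fun _ => k) i x = 0 := by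
  simp [pd]

lemma my_pd_proj (j i : Fin 4) (x : Fin 4 → ℝ) :
    pd (fun y => y j) i x = if j = i then 1 else 0 := by
  have h : (fun y : Fin 4 → ℝ => y j) = (ContinuousLinearMap.proj j : (Fin 4 → ℝ) →L[ℝ] ℝ) := rfl
  rw [pd, h, ContinuousLinearMap.fderiv]
  simp [Pi.single_apply]

lemma my_hasFDerivAt_cexp (c ρ : ℝ) (x : Fin 4 → ℝ) :
    HasFDerivAt (fun y : Fin 4 → ℝ => c * Real.exp (2*ρ*y 2))
      ((c * (2*ρ*Real.exp (2*ρ*x 2))) • (ContinuousLinearMap.proj 2 : (Fin 4 → ℝ) →L[ℝ] ℝ)) x := by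
  have h1 : HasFDerivAt (fun y : Fin 4 → ℝ => 2*ρ*y 2)
      ((2*ρ) • (ContinuousLinearMap.proj 2 : (Fin 4 → ℝ) →L[ℝ] ℝ)) x := by
    simpa using ((ContinuousLinearMap.proj (R := ℝ) (φ := fun _ : Fin 4 => ℝ) 2).hasFDerivAt
      (x := x)).const_mul (2*ρ)
  have h2 := (Real.hasDerivAt_exp (2*ρ*x 2)).comp_hasFDerivAt x h1
  have h3 := h2.const_mul c
  refine h3.congr_fderiv ?_
  ext v
  simp only [ContinuousLinearMap.smul_apply, ContinuousLinearMap.proj_apply, smul_eq_mul,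
    Function.comp]
  ring

lemma my_pd_cexp (c ρ : ℝ) (i : Fin 4) (x : Fin 4 → ℝ) :
    pd (fun y => c * Real.exp (2*ρ*y 2)) i x
      = (if (2:Fin 4) = i then 1 else 0) * (c * (2*ρ*Real.exp (2*ρ*x 2))) := by
  rw [pd, (my_hasFDerivAt_cexp c ρ x).fderiv]
  simp [Pi.single_apply]

lemma ginv_eq (ρ : ℝ) (ginv : (Fin 4 → ℝ) → Fin 4 → Fin 4 → ℝ)
    (hinv : ∀ x a b, (∑ c, ppg ρ x a c * ginv x c b) = if a = b then (1:ℝ) else 0) :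
    ∀ x a b, ginv x a b = gex ρ x a b := by
  intro x a b
  have h0 := hinv x 0 b
  have h1 := hinv x 1 b
  have h2 := hinv x 2 b
  have h3 := hinv x 3 b
  simp [ppg, Fin.sum_univ_four] at h0 h1 h2 h3
  fin_cases a <;> fin_cases b <;> simp_all [gex] <;> linarith

lemma ppg_pd (ρ : ℝ) (d c b : Fin 4) (x : Fin 4 → ℝ) :
    pd (fun y => ppg ρ y d c) b x
      = (if d = 0 ∧ c = 0 then 1 else 0) *
        ((if (2:Fin 4) = b then 1 else 0) * (-4*ρ*Real.exp (2*ρ*x 2))) := by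
  by_cases h : d = 0 ∧ c = 0
  · obtain ⟨rfl, rfl⟩ := h
    have e : (fun y => ppg ρ y 0 0) = fun y => (-2:ℝ) * Real.exp (2*ρ*y 2) := by
      funext y; simp [ppg]
    rw [e, my_pd_cexp]
    split <;> simp <;> ring_nf
  · have e : (fun y => ppg ρ y d c) = fun _ => ppg ρ x d c := by
      funext y; simp only [ppg, if_neg h]
    rw [e, my_pd_const, if_neg h]
    ring

/-- The nonzero Christoffel coefficients (as multiples of `exp (2ρx)`). -/
def Cγ (ρ : ℝ) (c a b : Fin 4) : ℝ :=
  if c = 2 ∧ a = 0 ∧ b = 0 then 2*ρ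
  else if c = 1 ∧ ((a = 0 ∧ b = 2) ∨ (a = 2 ∧ b = 0)) then -2*ρ
  else 0

set_option maxHeartbeats 2000000 in
lemma Γ_eq (ρ : ℝ) (ginv : (Fin 4 → ℝ) → Fin 4 → Fin 4 → ℝ)
    (hg : ∀ x a b, ginv x a b = gex ρ x a b) (c a b : Fin 4) :
    Γ ginv (ppg ρ) c a b = fun x => Cγ ρ c a b * Real.exp (2*ρ*x 2) := by
  funext x
  rw [Γ]
  simp only [hg, ppg_pd, Fin.sum_univ_four]
  fin_cases c <;> fin_cases a <;> fin_cases b <;> simp [gex, Cγ] <;> ring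

lemma Γ_val (ρ : ℝ) (ginv : (Fin 4 → ℝ) → Fin 4 → Fin 4 → ℝ)
    (hg : ∀ x a b, ginv x a b = gex ρ x a b) (c a b : Fin 4) (x : Fin 4 → ℝ) :
    Γ ginv (ppg ρ) c a b x = Cγ ρ c a b * Real.exp (2*ρ*x 2) := by
  rw [Γ_eq ρ ginv hg]

lemma pd_Γ (ρ : ℝ) (ginv : (Fin 4 → ℝ) → Fin 4 → Fin 4 → ℝ)
    (hg : ∀ x a b, ginv x a b = gex ρ x a b) (c a b d : Fin 4) (x : Fin 4 → ℝ) :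
    pd (Γ ginv (ppg ρ) c a b) d x
      = (if (2:Fin 4) = d then 1 else 0) * (Cγ ρ c a b * (2*ρ*Real.exp (2*ρ*x 2))) := by
  rw [Γ_eq ρ ginv hg, my_pd_cexp]

lemma pdY (m j k a : Fin 4) (x : Fin 4 → ℝ) :
    pd (fun y => if k = m then y j else 0) a x
      = if k = m then (if j = a then 1 else 0) else 0 := by
  by_cases h : k = m
  · simp only [h, if_true]
    exact my_pd_proj j a x
  · simp [h, my_pd_const]

lemma pdY2 (m j k a b : Fin 4) (x : Fin 4 → ℝ) :
    pd (fun y => pd (fun z => if k = m then z j else 0) b y) a x = 0 := by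
  have e : (fun y => pd (fun z => if k = m then z j else 0) b y)
      = fun _ : Fin 4 → ℝ => (if k = m then (if j = b then (1:ℝ) else 0) else 0) :=
    funext fun y => pdY m j k b y
  rw [e, my_pd_const]

/-- for the pure-radiation pp-wave metric
`ds² = dx² + dy² + 2 du dv − 2 e^{2ρx} du²` (`ρ ≠ 0`), the vector fields `y∂_y`, `u∂_v`
and `u∂_y` all satisfy the affine symmetry condition `L_Y Γ = 0`. -/
theorem radiation_pp_wave_affine_fields (ρ : ℝ) (hρ : ρ ≠ 0)
    (ginv : (Fin 4 → ℝ) → Fin 4 → Fin 4 → ℝ)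
    (hinv : ∀ x a b, (∑ c, ppg ρ x a c * ginv x c b) = if a = b then (1:ℝ) else 0) :
    (∀ (x : Fin 4 → ℝ) (c a b : Fin 4),
        LieΓ ginv (ppg ρ) (fun y k => if k = 3 then y 3 else 0) c a b x = 0) ∧
    (∀ (x : Fin 4 → ℝ) (c a b : Fin 4),
        LieΓ ginv (ppg ρ) (fun y k => if k = 1 then y 0 else 0) c a b x = 0) ∧
    (∀ (x : Fin 4 → ℝ) (c a b : Fin 4),
        LieΓ ginv (ppg ρ) (fun y k => if k = 3 then y 0 else 0) c a b x = 0) := by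
  have hg := ginv_eq ρ ginv hinv
  refine ⟨fun x c a b => ?_, fun x c a b => ?_, fun x c a b => ?_⟩ <;>
  · rw [LieΓ]
    simp only [Fin.sum_univ_four, pd_Γ ρ ginv hg, pdY, pdY2, Γ_val ρ ginv hg]
    simp [Cγ]
    exact my_pd_const _ a x
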